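/- Let B be the formal power series over ℚ with B = ∑_{n≥0} binom(2n,n) z^n. For every n ≥ 0, the coefficient of z^n in B + 2zB³ equals (n+1)·binom(2n,n); that is, (zB)′ = B + 2zB³ and the total number of vertices over all right path trees with n edges is (n+1)·binom(2n,n). -/

import Mathlib

open PowerSeries Finset

/-- The central binomial generating function `B = ∑ binom(2n,n) zⁿ` over `ℚ`. -/
noncomputable def Bgf : PowerSeries ℚ := PowerSeries.mk fun n => ((2 * n).choose n : ℚ)

lemma coeff_Bgf (n : ℕ) : PowerSeries.coeff n Bgf = ((2 * n).choose n : ℚ) := by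
  simp [Bgf]

lemma cb_rec (n : ℕ) :
    ((n : ℚ) + 1) * ((2 * (n + 1)).choose (n + 1) : ℚ)
      = (2 * (2 * n + 1)) * ((2 * n).choose n : ℚ) := by
  have h := Nat.succ_mul_centralBinom_succ n
  have : (((n + 1) * Nat.centralBinom (n + 1) : ℕ) : ℚ)
      = ((2 * (2 * n + 1) * Nat.centralBinom n : ℕ) : ℚ) := by rw [h]
  simp only [Nat.centralBinom] at this
  push_cast at this
  linarith

/-- The ODE `(1 - 4X) B' = 2 B`. -/
lemma ode : (1 - 4 * PowerSeries.X) * d⁄dX ℚ Bgf = 2 * Bgf := by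
  ext n
  rw [sub_mul, one_mul, map_sub]
  have h4 : (4 : ℚ⟦X⟧) * PowerSeries.X * d⁄dX ℚ Bgf
      = PowerSeries.X * ((4 : ℚ) • d⁄dX ℚ Bgf) := by
    rw [PowerSeries.smul_eq_C_mul, show ((C (R := ℚ)) 4 : ℚ⟦X⟧) = 4 from map_ofNat _ 4]; ring
  rw [h4]
  cases n with
  | zero =>
      simp [coeff_derivative, Bgf, map_ofNat]
  | succ n =>
      rw [PowerSeries.coeff_succ_X_mul]
      simp only [two_mul, map_add, coeff_derivative, coeff_Bgf, map_smul, smul_eq_mul]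
      have h1 := cb_rec (n + 1)
      have h2 := cb_rec n
      push_cast at h1 h2 ⊢
      rw [show n + 1 + 1 + (n + 1 + 1) = 2 * (n + 1 + 1) by ring,
        show n + 1 + (n + 1) = 2 * (n + 1) by ring]
      linarith [h1, h2]

lemma B2 : (1 - 4 * PowerSeries.X) * Bgf ^ 2 = 1 := by
  apply derivative.ext
  · have h4 : d⁄dX ℚ (4 : ℚ⟦X⟧) = 0 := by
      rw [← map_ofNat (C (R := ℚ)) 4, derivative_C]
    simp only [h4, Derivation.leibniz, Derivation.leibniz_pow, smul_eq_mul, map_sub, map_one,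
      map_mul, derivative_X, map_ofNat, Derivation.map_one_eq_zero, nsmul_eq_mul,
      Nat.cast_ofNat, pow_one]
    linear_combination (2 * Bgf) * ode
  · simp [Bgf, map_ofNat]

lemma dBgf : d⁄dX ℚ Bgf = 2 * Bgf ^ 3 := by
  calc d⁄dX ℚ Bgf = ((1 - 4 * PowerSeries.X) * Bgf ^ 2) * d⁄dX ℚ Bgf := by
        rw [B2, one_mul]
    _ = Bgf ^ 2 * ((1 - 4 * PowerSeries.X) * d⁄dX ℚ Bgf) := by ring
    _ = Bgf ^ 2 * (2 * Bgf) := by rw [ode]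
    _ = 2 * Bgf ^ 3 := by ring

theorem stmt16 :
    d⁄dX ℚ (PowerSeries.X * Bgf) = Bgf + 2 * PowerSeries.X * Bgf ^ 3 ∧
    ∀ n : ℕ, PowerSeries.coeff n (Bgf + 2 * PowerSeries.X * Bgf ^ 3) =
      ((n + 1 : ℕ) : ℚ) * ((2 * n).choose n : ℚ) := by
  have h1 : d⁄dX ℚ (PowerSeries.X * Bgf) = Bgf + 2 * PowerSeries.X * Bgf ^ 3 := by
    rw [Derivation.leibniz, smul_eq_mul, smul_eq_mul, derivative_X, dBgf]
    ring
  refine ⟨h1, fun n => ?_⟩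
  rw [← h1, coeff_derivative, PowerSeries.coeff_succ_X_mul, coeff_Bgf]
  push_cast
  ring
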